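/- A maximal outerplanar graph on n > 3 vertices has at least three vertices of degree 2 if and only if some inner triangle of its triangulation shares each of its three edges with another inner triangle (an 'internal' triangle). -/

import Mathlib

/-- A triangulation of a polygon, given by the cyclic list of its boundary
vertices (up to rotation) and the set of its triangles.  It is built by
repeatedly stacking an ear (a new vertex `v` inserted between two consecutive
boundary vertices `a`,`b`, together with the triangle `{a,v,b}`) onto a
single starting triangle. -/
inductive PolygonTriangulation : List ℕ → Finset (Finset ℕ) → Prop
  | base (a b c : ℕ) (h : ([a, b, c] : List ℕ).Nodup) :
      PolygonTriangulation [a, b, c] {({a, b, c} : Finset ℕ)}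
  | ear (l₁ l₂ : List ℕ) (a v b : ℕ) (T : Finset (Finset ℕ))
      (h : PolygonTriangulation (l₁ ++ a :: b :: l₂) T)
      (hv : v ∉ l₁ ++ a :: b :: l₂) :
      PolygonTriangulation (l₁ ++ a :: v :: b :: l₂) (insert {a, v, b} T)

/-- The (maximal outerplanar) graph of a triangulation: two distinct vertices
are adjacent iff they lie in a common triangle. -/
def triGraph (T : Finset (Finset ℕ)) : SimpleGraph ℕ where
  Adj u v := u ≠ v ∧ ∃ t ∈ T, u ∈ t ∧ v ∈ t
  symm := ⟨fun u v ⟨h, t, ht, hu, hv⟩ => ⟨h.symm, t, ht, hv, hu⟩⟩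
  loopless := ⟨fun u ⟨h, _⟩ => h rfl⟩

/-- Degree of a vertex in the graph of a triangulation. -/
noncomputable def triDeg (T : Finset (Finset ℕ)) (v : ℕ) : ℕ :=
  {u | (triGraph T).Adj v u}.ncard

/-- Degree of a triangle in the weak dual (number of other triangles sharing
an edge, i.e. two vertices, with it). -/
noncomputable def dualDeg (T : Finset (Finset ℕ)) (s : Finset ℕ) : ℕ :=
  {r | r ∈ T ∧ r ≠ s ∧ (r ∩ s).card = 2}.ncard

/-- The weak dual of a triangulation: vertices are the triangles, two
triangles adjacent iff they share an edge (two vertices). -/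
def dualGraph (T : Finset (Finset ℕ)) : SimpleGraph {t : Finset ℕ // t ∈ T} where
  Adj s t := s ≠ t ∧ ((s : Finset ℕ) ∩ (t : Finset ℕ)).card = 2
  symm := ⟨fun s t ⟨h, hc⟩ => ⟨h.symm, by rwa [Finset.inter_comm]⟩⟩
  loopless := ⟨fun s ⟨h, _⟩ => h rfl⟩

/-- Two vertices are cyclically adjacent on the boundary list `L`
(i.e. the pair is a polygon side, not a diagonal). -/
def CyclicAdj (L : List ℕ) (x y : ℕ) : Prop :=
  ∃ i : ℕ, i < L.length ∧
    ((L[i]? = some x ∧ L[(i + 1) % L.length]? = some y) ∨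
     (L[i]? = some y ∧ L[(i + 1) % L.length]? = some x))

namespace Aux

def ap (M : List ℕ) : List (ℕ × ℕ) := M.zip M.tail

def cyc (L : List ℕ) : List ℕ := L ++ L.take 1

lemma mem_ap {M : List ℕ} {x y : ℕ} :
    (x, y) ∈ ap M ↔ ∃ i : ℕ, ∃ h : i + 1 < M.length, M[i] = x ∧ M[i+1] = y := by
  constructor
  · intro h
    rw [List.mem_iff_getElem] at h
    obtain ⟨i, hi, he⟩ := h
    have hlen : (ap M).length = M.length - 1 := by
      simp [ap]
    have hi' : i + 1 < M.length := by omega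
    refine ⟨i, hi', ?_⟩
    have : (ap M)[i] = (M[i], M.tail[i]'(by simp [List.length_tail]; omega)) := by
      simp [ap, List.getElem_zip]
    rw [this] at he
    have ht : M.tail[i]'(by simp [List.length_tail]; omega) = M[i+1] := by
      simp [List.getElem_tail]
    rw [ht] at he
    exact ⟨congrArg Prod.fst he, congrArg Prod.snd he⟩
  · rintro ⟨i, hi, hx, hy⟩
    rw [List.mem_iff_getElem]
    refine ⟨i, by simp [ap, List.length_zip, List.length_tail]; omega, ?_⟩
    simp [ap, List.getElem_zip, List.getElem_tail, hx, hy]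

lemma mem_cyc {L : List ℕ} {x : ℕ} : x ∈ cyc L ↔ x ∈ L := by
  simp only [cyc, List.mem_append]
  constructor
  · rintro (h | h)
    · exact h
    · exact List.mem_of_mem_take h
  · exact Or.inl

lemma cyclicAdj_iff {L : List ℕ} (hL : L ≠ []) {x y : ℕ} :
    CyclicAdj L x y ↔ (x, y) ∈ ap (cyc L) ∨ (y, x) ∈ ap (cyc L) := by
  have hlen : (cyc L).length = L.length + 1 := by
    simp [cyc, List.length_take]
    have : 0 < L.length := List.length_pos_iff.2 hL
    omega
  have key : ∀ a b : ℕ, ((∃ i : ℕ, i < L.length ∧ L[i]? = some a ∧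
      L[(i + 1) % L.length]? = some b) ↔ (a, b) ∈ ap (cyc L)) := by
    intro a b
    constructor
    · rintro ⟨i, hi, ha, hb⟩
      rw [mem_ap]
      refine ⟨i, by omega, ?_, ?_⟩
      · have : (cyc L)[i]'(by omega) = L[i] := by
          simp [cyc]; rw [List.getElem_append_left hi]
        rw [this]
        obtain ⟨_, e⟩ := List.getElem?_eq_some_iff.1 ha
        exact e
      · rcases Nat.lt_or_ge (i+1) L.length with h'|h'
        · have hm : (i + 1) % L.length = i + 1 := Nat.mod_eq_of_lt h'
          rw [hm] at hb
          have : (cyc L)[i+1]'(by omega) = L[i+1] := by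
            simp [cyc]; rw [List.getElem_append_left h']
          rw [this]
          obtain ⟨_, e⟩ := List.getElem?_eq_some_iff.1 hb
          exact e
        · have hieq : i + 1 = L.length := by omega
          have hm : (i + 1) % L.length = 0 := by rw [hieq, Nat.mod_self]
          rw [hm] at hb
          have h0 : 0 < L.length := by omega
          have : (cyc L)[i+1]'(by omega) = L[0] := by
            simp only [cyc]
            rw [List.getElem_append_right (by omega)]
            have : L.take 1 = [L[0]] := by
              cases L with
              | nil => simp at hL
              | cons c cs => simp
            simp [this, hieq]
          rw [this]
          obtain ⟨_, e⟩ := List.getElem?_eq_some_iff.1 hb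
          exact e
    · intro h
      rw [mem_ap] at h
      obtain ⟨i, hi, ha, hb⟩ := h
      have hi' : i < L.length := by omega
      refine ⟨i, hi', ?_, ?_⟩
      · have : (cyc L)[i]'(by omega) = L[i] := by
          simp [cyc]; rw [List.getElem_append_left hi']
        rw [this] at ha
        simp [List.getElem?_eq_some_iff]
        exact ⟨hi', ha⟩
      · rcases Nat.lt_or_ge (i+1) L.length with h'|h'
        · have hm : (i + 1) % L.length = i + 1 := Nat.mod_eq_of_lt h'
          rw [hm]
          have : (cyc L)[i+1]'(by omega) = L[i+1] := by
            simp [cyc]; rw [List.getElem_append_left h']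
          rw [this] at hb
          simp [List.getElem?_eq_some_iff]
          exact ⟨h', hb⟩
        · have hieq : i + 1 = L.length := by omega
          have hm : (i + 1) % L.length = 0 := by rw [hieq, Nat.mod_self]
          rw [hm]
          have h0 : 0 < L.length := by omega
          have : (cyc L)[i+1]'(by omega) = L[0] := by
            simp only [cyc]
            rw [List.getElem_append_right (by omega)]
            have : L.take 1 = [L[0]] := by
              cases L with
              | nil => simp at hL
              | cons c cs => simp
            simp [this, hieq]
          rw [this] at hb
          simp [List.getElem?_eq_some_iff]
          exact ⟨h0, hb⟩
  unfold CyclicAdj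
  constructor
  · rintro ⟨i, hi, (⟨hx, hy⟩ | ⟨hy, hx⟩)⟩
    · exact Or.inl ((key x y).1 ⟨i, hi, hx, hy⟩)
    · exact Or.inr ((key y x).1 ⟨i, hi, hy, hx⟩)
  · rintro (h | h)
    · obtain ⟨i, hi, hx, hy⟩ := (key x y).2 h
      exact ⟨i, hi, Or.inl ⟨hx, hy⟩⟩
    · obtain ⟨i, hi, hy, hx⟩ := (key y x).2 h
      exact ⟨i, hi, Or.inr ⟨hy, hx⟩⟩


lemma ap_cons_cons (x y : ℕ) (M : List ℕ) : ap (x :: y :: M) = (x, y) :: ap (y :: M) := by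
  simp [ap]

lemma ap_append_cons : ∀ (X : List ℕ) (y : ℕ) (Z : List ℕ),
    ap (X ++ y :: Z) = ap (X ++ [y]) ++ ap (y :: Z)
  | [], y, Z => by simp [ap]
  | [c], y, Z => by simp [ap_cons_cons]; rfl
  | c :: d :: X, y, Z => by
    have ih := ap_append_cons (d :: X) y Z
    simp only [List.cons_append] at *
    rw [ap_cons_cons, ap_cons_cons, ih]
    simp

lemma ap_fst_mem_dropLast {M : List ℕ} {x y : ℕ} (h : (x, y) ∈ ap M) : x ∈ M.dropLast := by
  rw [List.mem_iff_getElem] at h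
  obtain ⟨i, hi, he⟩ := h
  have hlen : (ap M).length = M.length - 1 := by simp [ap]
  have hi1 : i + 1 < M.length := by omega
  have : (ap M)[i] = (M[i], M.tail[i]'(by simp [List.length_tail]; omega)) := by
    simp [ap, List.getElem_zip]
  rw [this] at he
  have hx : M[i] = x := congrArg Prod.fst he
  rw [List.mem_iff_getElem]
  exact ⟨i, by simp [List.length_dropLast]; omega, by rw [List.getElem_dropLast]; exact hx⟩

lemma ap_snd_mem_tail {M : List ℕ} {x y : ℕ} (h : (x, y) ∈ ap M) : y ∈ M.tail := by
  rw [List.mem_iff_getElem] at h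
  obtain ⟨i, hi, he⟩ := h
  have hlen : (ap M).length = M.length - 1 := by simp [ap]
  have : (ap M)[i] = (M[i]'(by omega), M.tail[i]'(by simp [List.length_tail]; omega)) := by
    simp [ap, List.getElem_zip]
  rw [this] at he
  have hy : M.tail[i]'(by simp [List.length_tail]; omega) = y := congrArg Prod.snd he
  exact hy ▸ List.getElem_mem _

lemma ap_mem_mem {M : List ℕ} {x y : ℕ} (h : (x, y) ∈ ap M) : x ∈ M ∧ y ∈ M :=
  ⟨(List.dropLast_sublist M).mem (ap_fst_mem_dropLast h), (List.tail_sublist M).mem (ap_snd_mem_tail h)⟩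

lemma cyclicAdj_symm {L : List ℕ} {x y : ℕ} (h : CyclicAdj L x y) : CyclicAdj L y x := by
  obtain ⟨i, hi, h⟩ := h
  exact ⟨i, hi, h.symm⟩

lemma cyclicAdj_mem {L : List ℕ} {x y : ℕ} (h : CyclicAdj L x y) : x ∈ L ∧ y ∈ L := by
  obtain ⟨i, hi, h⟩ := h
  have hm : ∀ (j : ℕ) (z : ℕ), L[j]? = some z → z ∈ L := by
    intro j z hj
    obtain ⟨hb, e⟩ := List.getElem?_eq_some_iff.1 hj
    exact e ▸ List.getElem_mem hb
  rcases h with ⟨h1, h2⟩ | ⟨h1, h2⟩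
  · exact ⟨hm _ _ h1, hm _ _ h2⟩
  · exact ⟨hm _ _ h2, hm _ _ h1⟩

lemma succ_mod {i n : ℕ} (h : i < n) : (i + 1) % n = i + 1 ∨ (i + 1 = n ∧ (i + 1) % n = 0) := by
  rcases Nat.lt_or_ge (i + 1) n with h' | h'
  · exact Or.inl (Nat.mod_eq_of_lt h')
  · have : i + 1 = n := by omega
    exact Or.inr ⟨this, by rw [this, Nat.mod_self]⟩

lemma cyclicAdj_indexOf {L : List ℕ} {x y : ℕ} (hnd : L.Nodup) (h : CyclicAdj L x y) :
    (L.idxOf x + 1) % L.length = L.idxOf y ∨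
    (L.idxOf y + 1) % L.length = L.idxOf x := by
  obtain ⟨i, hi, h⟩ := h
  have hn : 0 < L.length := by omega
  have hmod : (i + 1) % L.length < L.length := Nat.mod_lt _ hn
  have key : ∀ z w, L[i]? = some z → L[(i + 1) % L.length]? = some w →
      (L.idxOf z + 1) % L.length = L.idxOf w := by
    intro z w hz hw
    obtain ⟨_, ez⟩ := List.getElem?_eq_some_iff.1 hz
    obtain ⟨_, ew⟩ := List.getElem?_eq_some_iff.1 hw
    have iz : L.idxOf z = i := by rw [← ez]; exact hnd.idxOf_getElem i hi
    have iw : L.idxOf w = (i + 1) % L.length := by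
      rw [← ew]; exact hnd.idxOf_getElem _ hmod
    rw [iz, iw]
  rcases h with ⟨h1, h2⟩ | ⟨h1, h2⟩
  · exact Or.inl (key x y h1 h2)
  · exact Or.inr (key y x h1 h2)

lemma eq_of_indexOf_eq {L : List ℕ} {x y : ℕ} (hx : x ∈ L) (hy : y ∈ L)
    (h : L.idxOf x = L.idxOf y) : x = y := by
  have ex : L[L.idxOf x]'(List.idxOf_lt_length_iff.2 hx) = x := List.getElem_idxOf _
  have ey : L[L.idxOf y]'(List.idxOf_lt_length_iff.2 hy) = y := List.getElem_idxOf _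
  rw [← ex, ← ey]
  simp [h]

lemma cyclicAdj_ne {L : List ℕ} {x y : ℕ} (hnd : L.Nodup) (hlen : 3 ≤ L.length)
    (h : CyclicAdj L x y) : x ≠ y := by
  rintro rfl
  obtain ⟨hx, -⟩ := cyclicAdj_mem h
  rcases cyclicAdj_indexOf hnd h with h' | h' <;>
  · have hi : L.idxOf x < L.length := List.idxOf_lt_length_iff.2 hx
    rcases succ_mod hi with e | ⟨e1, e2⟩ <;> omega

lemma lin_rel {n i j : ℕ} (hi : i < n) (hj : j < n)
    (h : (i + 1) % n = j ∨ (j + 1) % n = i) :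
    j = i + 1 ∨ (i + 1 = n ∧ j = 0) ∨ i = j + 1 ∨ (j + 1 = n ∧ i = 0) := by
  rcases succ_mod hi with e | ⟨e1, e2⟩ <;> rcases succ_mod hj with f | ⟨f1, f2⟩ <;> omega

lemma two_nbrs {L : List ℕ} {a x y z : ℕ} (hnd : L.Nodup)
    (h1 : CyclicAdj L a x) (h2 : CyclicAdj L a y) (h3 : CyclicAdj L a z) :
    x = y ∨ x = z ∨ y = z := by
  obtain ⟨ha, hx⟩ := cyclicAdj_mem h1
  obtain ⟨-, hy⟩ := cyclicAdj_mem h2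
  obtain ⟨-, hz⟩ := cyclicAdj_mem h3
  set n := L.length with hn
  have hia : L.idxOf a < n := List.idxOf_lt_length_iff.2 ha
  have hix : L.idxOf x < n := List.idxOf_lt_length_iff.2 hx
  have hiy : L.idxOf y < n := List.idxOf_lt_length_iff.2 hy
  have hiz : L.idxOf z < n := List.idxOf_lt_length_iff.2 hz
  have r1 := lin_rel hia hix (cyclicAdj_indexOf hnd h1)
  have r2 := lin_rel hia hiy (cyclicAdj_indexOf hnd h2)
  have r3 := lin_rel hia hiz (cyclicAdj_indexOf hnd h3)
  have : L.idxOf x = L.idxOf y ∨ L.idxOf x = L.idxOf z ∨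
      L.idxOf y = L.idxOf z := by omega
  rcases this with e | e | e
  · exact Or.inl (eq_of_indexOf_eq hx hy e)
  · exact Or.inr (Or.inl (eq_of_indexOf_eq hx hz e))
  · exact Or.inr (Or.inr (eq_of_indexOf_eq hy hz e))

lemma three_cycle {L : List ℕ} {a b c : ℕ} (hnd : L.Nodup) (hlen : 4 ≤ L.length)
    (hab : a ≠ b) (hac : a ≠ c) (hbc : b ≠ c)
    (h1 : CyclicAdj L a b) (h2 : CyclicAdj L a c) (h3 : CyclicAdj L b c) : False := by
  obtain ⟨ha, hb⟩ := cyclicAdj_mem h1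
  obtain ⟨-, hc⟩ := cyclicAdj_mem h2
  set n := L.length with hn
  have hia : L.idxOf a < n := List.idxOf_lt_length_iff.2 ha
  have hib : L.idxOf b < n := List.idxOf_lt_length_iff.2 hb
  have hic : L.idxOf c < n := List.idxOf_lt_length_iff.2 hc
  have r1 := lin_rel hia hib (cyclicAdj_indexOf hnd h1)
  have r2 := lin_rel hia hic (cyclicAdj_indexOf hnd h2)
  have r3 := lin_rel hib hic (cyclicAdj_indexOf hnd h3)
  have nab : L.idxOf a ≠ L.idxOf b := fun e => hab (eq_of_indexOf_eq ha hb e)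
  have nac : L.idxOf a ≠ L.idxOf c := fun e => hac (eq_of_indexOf_eq ha hc e)
  have nbc : L.idxOf b ≠ L.idxOf c := fun e => hbc (eq_of_indexOf_eq hb hc e)
  omega

lemma nodup_unpack {l₁ l₂ : List ℕ} {a b : ℕ} (hnd : (l₁ ++ a :: b :: l₂).Nodup) :
    a ∉ l₁ ∧ b ∉ l₁ ∧ a ≠ b ∧ a ∉ l₂ ∧ b ∉ l₂ ∧ l₂.Nodup ∧ l₁.Nodup := by
  simp only [List.nodup_append, List.nodup_cons, List.mem_cons,
    List.disjoint_cons_right, List.mem_append] at hnd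
  obtain ⟨h1, ⟨h2, h3, h4⟩, h5⟩ := hnd
  exact ⟨fun h => h5 a h a (Or.inl rfl) rfl, fun h => h5 b h b (Or.inr (Or.inl rfl)) rfl,
    fun e => h2 (Or.inl e), fun h => h2 (Or.inr h), h3, h4, h1⟩

lemma head_exists (l₁ : List ℕ) (a : ℕ) : ∃ h0 : ℕ,
    (∀ X : List ℕ, (l₁ ++ a :: X).take 1 = [h0]) ∧
    (l₁ = [] → h0 = a) ∧ (l₁ ≠ [] → h0 ∈ l₁) := by
  cases l₁ with
  | nil => exact ⟨a, fun X => rfl, fun _ => rfl, fun h => absurd rfl h⟩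
  | cons c l => exact ⟨c, fun X => rfl, fun h => by simp at h, fun _ => List.mem_cons_self⟩

lemma pairs_step {l₁ l₂ : List ℕ} {a v b h0 : ℕ}
    (ha1 : a ∉ l₁) (hb1 : b ∉ l₁) (hab : a ≠ b) (ha2 : a ∉ l₂) (hb2 : b ∉ l₂)
    (hva : v ≠ a) (hvb : v ≠ b) (hv1 : v ∉ l₁) (hv2 : v ∉ l₂) (hvh : v ≠ h0)
    (p : ℕ × ℕ) :
    p ∈ ap (l₁ ++ a :: v :: b :: (l₂ ++ [h0])) ↔
      (p ∈ ap (l₁ ++ a :: b :: (l₂ ++ [h0])) ∧ p ≠ (a, b)) ∨ p = (a, v) ∨ p = (v, b) := by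
  have d1 : ap (l₁ ++ a :: v :: b :: (l₂ ++ [h0])) =
      ap (l₁ ++ [a]) ++ (a, v) :: (v, b) :: ap (b :: (l₂ ++ [h0])) := by
    rw [ap_append_cons l₁ a, ap_cons_cons, ap_cons_cons]
  have d2 : ap (l₁ ++ a :: b :: (l₂ ++ [h0])) =
      ap (l₁ ++ [a]) ++ (a, b) :: ap (b :: (l₂ ++ [h0])) := by
    rw [ap_append_cons l₁ a, ap_cons_cons]
  have hnab1 : (a, b) ∉ ap (l₁ ++ [a]) := by
    intro hm
    have := ap_fst_mem_dropLast hm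
    rw [List.dropLast_concat] at this
    exact ha1 this
  have hnab2 : (a, b) ∉ ap (b :: (l₂ ++ [h0])) := by
    intro hm
    have := ap_fst_mem_dropLast hm
    have e : (b :: (l₂ ++ [h0])).dropLast = b :: l₂ := by
      rw [show b :: (l₂ ++ [h0]) = (b :: l₂) ++ [h0] by simp, List.dropLast_concat]
    rw [e] at this
    rcases List.mem_cons.1 this with e' | e'
    · exact hab e'
    · exact ha2 e'
  rw [d1, d2]
  simp only [List.mem_append, List.mem_cons]
  constructor
  · rintro (hA | h | h | hB)
    · exact Or.inl ⟨Or.inl hA, fun e => hnab1 (e ▸ hA)⟩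
    · exact Or.inr (Or.inl h)
    · exact Or.inr (Or.inr h)
    · exact Or.inl ⟨Or.inr (Or.inr hB), fun e => hnab2 (e ▸ hB)⟩
  · rintro (⟨hA | rfl | hB, hne⟩ | h | h)
    · exact Or.inl hA
    · exact absurd rfl hne
    · exact Or.inr (Or.inr (Or.inr hB))
    · exact Or.inr (Or.inl h)
    · exact Or.inr (Or.inr (Or.inl h))

lemma ba_not_mem {l₁ l₂ : List ℕ} {a b h0 : ℕ}
    (ha1 : a ∉ l₁) (hb1 : b ∉ l₁) (hab : a ≠ b) (ha2 : a ∉ l₂) (hb2 : b ∉ l₂)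
    (hnd2 : l₂.Nodup)
    (hh1 : l₁ = [] → h0 = a) (hh2 : l₁ ≠ [] → h0 ∈ l₁)
    (hlen : l₁ ≠ [] ∨ l₂ ≠ []) :
    (b, a) ∉ ap (l₁ ++ a :: b :: (l₂ ++ [h0])) := by
  intro hm
  rw [ap_append_cons l₁ a, ap_cons_cons] at hm
  rcases List.mem_append.1 hm with hA | hm
  · have := ap_fst_mem_dropLast hA
    rw [List.dropLast_concat] at this
    exact hb1 this
  rcases List.mem_cons.1 hm with e | hB
  · exact hab (congrArg Prod.snd e)
  have hsnd := ap_snd_mem_tail hB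
  simp only [List.tail_cons, List.mem_append, List.mem_singleton] at hsnd
  rcases hsnd with h' | rfl
  · exact ha2 h'
  -- now h0 = a, so l₁ = []
  have hl1 : l₁ = [] := by
    by_contra hne
    exact ha1 (hh2 hne)
  have hl2 : l₂ ≠ [] := by
    rcases hlen with h' | h'
    · exact absurd hl1 h'
    · exact h'
  -- M = b :: (l₂ ++ [a]) is nodup
  set M := b :: (l₂ ++ [a]) with hM
  have hndM : M.Nodup := by
    rw [hM]
    simp only [List.nodup_cons, List.mem_append, List.mem_singleton]
    refine ⟨by tauto, ?_⟩
    simp only [List.nodup_append, List.nodup_singleton, List.disjoint_singleton]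
    exact ⟨hnd2, trivial, fun x hx y hy e => ha2 (by rw [List.mem_singleton] at hy; subst hy; subst e; exact hx)⟩
  rw [mem_ap] at hB
  obtain ⟨i, hi, e1, e2⟩ := hB
  have hi0 : i = 0 := by
    have := hndM.idxOf_getElem i (by omega)
    rw [e1] at this
    have h0' : M.idxOf b = 0 := by rw [hM]; exact List.idxOf_cons_self
    omega
  subst hi0
  have hlt : 0 < l₂.length := List.length_pos_iff.2 hl2
  have e2' : l₂[0] = a := by
    have h1 : M[0+1]'(by omega) = (l₂ ++ [a])[0]'(by simp) := by simp [hM]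
    rw [h1, List.getElem_append_left hlt] at e2
    exact e2
  exact ha2 (e2' ▸ List.getElem_mem hlt)

lemma adj_step {l₁ l₂ : List ℕ} {a v b : ℕ}
    (hnd : (l₁ ++ a :: b :: l₂).Nodup) (hv : v ∉ l₁ ++ a :: b :: l₂)
    (hlen : 3 ≤ (l₁ ++ a :: b :: l₂).length) (x y : ℕ) :
    CyclicAdj (l₁ ++ a :: v :: b :: l₂) x y ↔
      (CyclicAdj (l₁ ++ a :: b :: l₂) x y ∧ ¬(x = a ∧ y = b) ∧ ¬(x = b ∧ y = a)) ∨
      (x = a ∧ y = v) ∨ (x = v ∧ y = a) ∨ (x = v ∧ y = b) ∨ (x = b ∧ y = v) := by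
  obtain ⟨ha1, hb1, hab, ha2, hb2, hnd2, hnd1⟩ := nodup_unpack hnd
  obtain ⟨h0, htk, hh1, hh2⟩ := head_exists l₁ a
  simp only [List.mem_append, List.mem_cons] at hv
  push_neg at hv
  obtain ⟨hv1, hva, hvb, hv2⟩ := hv
  have hvh : v ≠ h0 := by
    rcases eq_or_ne l₁ [] with rfl | hne
    · rw [hh1 rfl]; exact hva
    · intro e; exact hv1 (e ▸ hh2 hne)
  have hL : (l₁ ++ a :: b :: l₂) ≠ [] := by simp
  have hL' : (l₁ ++ a :: v :: b :: l₂) ≠ [] := by simp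
  have hcyc' : cyc (l₁ ++ a :: v :: b :: l₂) = l₁ ++ a :: v :: b :: (l₂ ++ [h0]) := by
    rw [cyc, htk (v :: b :: l₂)]
    simp
  have hcyc : cyc (l₁ ++ a :: b :: l₂) = l₁ ++ a :: b :: (l₂ ++ [h0]) := by
    rw [cyc, htk (b :: l₂)]
    simp
  have hba := ba_not_mem ha1 hb1 hab ha2 hb2 hnd2 hh1 hh2
    (by
      rcases l₁ with _ | ⟨c, l⟩
      · right
        simp only [List.nil_append, List.length_cons] at hlen
        intro e
        rw [e] at hlen
        simp at hlen
      · left; simp)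
  have hps := fun p => pairs_step (h0 := h0) ha1 hb1 hab ha2 hb2 hva hvb hv1 hv2 hvh p
  have hca : CyclicAdj (l₁ ++ a :: b :: l₂) x y ↔
      ((x, y) ∈ ap (l₁ ++ a :: b :: (l₂ ++ [h0])) ∨
       (y, x) ∈ ap (l₁ ++ a :: b :: (l₂ ++ [h0]))) := by
    rw [cyclicAdj_iff hL, hcyc]
  rw [cyclicAdj_iff hL', hcyc', hps (x, y), hps (y, x)]
  simp only [ne_eq, Prod.mk.injEq]
  constructor
  · rintro ((⟨hm, hne⟩ | ⟨rfl, rfl⟩ | ⟨rfl, rfl⟩) | (⟨hm, hne⟩ | ⟨rfl, rfl⟩ | ⟨rfl, rfl⟩))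
    · exact Or.inl ⟨hca.2 (Or.inl hm), hne, by rintro ⟨rfl, rfl⟩; exact hba hm⟩
    · exact Or.inr (Or.inl ⟨rfl, rfl⟩)
    · exact Or.inr (Or.inr (Or.inr (Or.inl ⟨rfl, rfl⟩)))
    · exact Or.inl ⟨hca.2 (Or.inr hm), by rintro ⟨rfl, rfl⟩; exact hba hm,
        fun ⟨e1, e2⟩ => hne ⟨e2, e1⟩⟩
    · exact Or.inr (Or.inr (Or.inl ⟨rfl, rfl⟩))
    · exact Or.inr (Or.inr (Or.inr (Or.inr ⟨rfl, rfl⟩)))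
  · rintro (⟨hadj, hne1, hne2⟩ | ⟨rfl, rfl⟩ | ⟨rfl, rfl⟩ | ⟨rfl, rfl⟩ | ⟨rfl, rfl⟩)
    · rcases hca.1 hadj with hm | hm
      · exact Or.inl (Or.inl ⟨hm, hne1⟩)
      · exact Or.inr (Or.inl ⟨hm, fun ⟨e1, e2⟩ => hne2 ⟨e2, e1⟩⟩)
    · exact Or.inl (Or.inr (Or.inl ⟨rfl, rfl⟩))
    · exact Or.inr (Or.inr (Or.inl ⟨rfl, rfl⟩))
    · exact Or.inl (Or.inr (Or.inr ⟨rfl, rfl⟩))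
    · exact Or.inr (Or.inr (Or.inr ⟨rfl, rfl⟩))

/-! ### Invariant machinery -/

def tl (T : Finset (Finset ℕ)) (x y : ℕ) : Finset (Finset ℕ) :=
  T.filter fun t => x ∈ t ∧ y ∈ t

def tv (T : Finset (Finset ℕ)) (w : ℕ) : Finset (Finset ℕ) :=
  T.filter fun t => w ∈ t

@[simp] lemma mem_tl {T : Finset (Finset ℕ)} {x y : ℕ} {t : Finset ℕ} :
    t ∈ tl T x y ↔ t ∈ T ∧ x ∈ t ∧ y ∈ t := Finset.mem_filter

@[simp] lemma mem_tv {T : Finset (Finset ℕ)} {w : ℕ} {t : Finset ℕ} :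
    t ∈ tv T w ↔ t ∈ T ∧ w ∈ t := Finset.mem_filter

lemma tl_symm (T : Finset (Finset ℕ)) (x y : ℕ) : tl T x y = tl T y x := by
  ext t; simp [mem_tl]; tauto

lemma tl_subset_tv (T : Finset (Finset ℕ)) (x y : ℕ) : tl T x y ⊆ tv T x := by
  intro t ht; simp at ht ⊢; tauto

def earSet (L : List ℕ) (T : Finset (Finset ℕ)) : Set ℕ :=
  {w : ℕ | w ∈ L ∧ triDeg T w = 2}

def Internal (L : List ℕ) (t : Finset ℕ) : Prop :=
  ∀ x ∈ t, ∀ y ∈ t, x ≠ y → ¬CyclicAdj L x y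

open Classical in
noncomputable def intF (L : List ℕ) (T : Finset (Finset ℕ)) : Finset (Finset ℕ) :=
  T.filter (Internal L)

structure Inv (L : List ℕ) (T : Finset (Finset ℕ)) : Prop where
  nodup : L.Nodup
  len3 : 3 ≤ L.length
  tri : ∀ t ∈ T, t.card = 3 ∧ ∀ x ∈ t, x ∈ L
  bdry : ∀ x y : ℕ, CyclicAdj L x y → (tl T x y).card = 1
  diag : ∀ x y : ℕ, ∀ t ∈ T, x ∈ t → y ∈ t → x ≠ y → ¬CyclicAdj L x y →
    (tl T x y).card = 2
  deg : ∀ w ∈ L, triDeg T w = (tv T w).card + 1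
  fan : ∀ w x y : ℕ, w ∈ L → CyclicAdj L w x → CyclicAdj L w y → x ≠ y →
    ((tv T w).card = 1 ↔ ({w, x, y} : Finset ℕ) ∈ T)
  count3 : L.length = 3 → (earSet L T).ncard = 3 ∧ (intF L T).card = 0
  count : 4 ≤ L.length → (earSet L T).ncard = (intF L T).card + 2

lemma third_vertex {t : Finset ℕ} {a b : ℕ} (h3 : t.card = 3) (ha : a ∈ t) (hb : b ∈ t)
    (hab : a ≠ b) : ∃ c, c ≠ a ∧ c ≠ b ∧ t = {a, b, c} := by
  classical
  have hsub : ({a, b} : Finset ℕ) ⊆ t := by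
    intro z hz
    rcases Finset.mem_insert.1 hz with rfl | hz
    · exact ha
    · rwa [Finset.mem_singleton.1 hz]
  have hpair : ({a, b} : Finset ℕ).card = 2 := Finset.card_pair hab
  have hdiff : (t \ {a, b}).card = 1 := by
    rw [Finset.card_sdiff_of_subset hsub, hpair, h3]
  obtain ⟨c, hc⟩ := Finset.card_eq_one.1 hdiff
  have hcm : c ∈ t \ ({a, b} : Finset ℕ) := hc ▸ Finset.mem_singleton_self c
  rw [Finset.mem_sdiff, Finset.mem_insert, Finset.mem_singleton] at hcm
  refine ⟨c, fun e => hcm.2 (Or.inl e), fun e => hcm.2 (Or.inr e), ?_⟩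
  ext z
  simp only [Finset.mem_insert, Finset.mem_singleton]
  constructor
  · intro hz
    by_cases h1 : z = a
    · exact Or.inl h1
    by_cases h2 : z = b
    · exact Or.inr (Or.inl h2)
    have : z ∈ t \ ({a, b} : Finset ℕ) := by
      rw [Finset.mem_sdiff, Finset.mem_insert, Finset.mem_singleton]
      exact ⟨hz, by tauto⟩
    rw [hc, Finset.mem_singleton] at this
    exact Or.inr (Or.inr this)
  · rintro (rfl | rfl | rfl)
    · exact ha
    · exact hb
    · exact hcm.1

lemma all_pairs3 {a b c x y : ℕ} (hx : x ∈ ([a, b, c] : List ℕ)) (hy : y ∈ ([a, b, c] : List ℕ))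
    (hxy : x ≠ y) : CyclicAdj [a, b, c] x y := by
  simp only [List.mem_cons, List.not_mem_nil, or_false] at hx hy
  rcases hx with rfl | rfl | rfl <;> rcases hy with rfl | rfl | rfl <;>
    first
      | exact absurd rfl hxy
      | (refine ⟨0, by simp, Or.inl ⟨?_, ?_⟩⟩ <;> (simp; done))
      | (refine ⟨1, by simp, Or.inl ⟨?_, ?_⟩⟩ <;> (simp; done))
      | (refine ⟨2, by simp, Or.inl ⟨?_, ?_⟩⟩ <;> (simp; done))
      | (refine ⟨0, by simp, Or.inr ⟨?_, ?_⟩⟩ <;> (simp; done))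
      | (refine ⟨1, by simp, Or.inr ⟨?_, ?_⟩⟩ <;> (simp; done))
      | (refine ⟨2, by simp, Or.inr ⟨?_, ?_⟩⟩ <;> (simp; done))

lemma base_case {a b c : ℕ} (h : ([a, b, c] : List ℕ).Nodup) :
    Inv [a, b, c] {({a, b, c} : Finset ℕ)} := by
  have hd : a ≠ b ∧ a ≠ c ∧ b ≠ c := by
    simp only [List.nodup_cons, List.mem_cons, List.not_mem_nil, or_false,
      List.nodup_nil, and_true] at h
    tauto
  obtain ⟨hab, hac, hbc⟩ := hd
  set t0 : Finset ℕ := {a, b, c} with ht0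
  have hcard : t0.card = 3 := by
    rw [ht0, Finset.card_insert_of_notMem (by simp [hab, hac]),
      Finset.card_insert_of_notMem (by simp [hbc]), Finset.card_singleton]
  have hmem_t0 : ∀ x : ℕ, x ∈ t0 ↔ x ∈ ([a, b, c] : List ℕ) := by
    intro x; simp [ht0]
  have hnd : ([a, b, c] : List ℕ).Nodup := h
  have hlen : (3 : ℕ) ≤ ([a, b, c] : List ℕ).length := by simp
  have hdeg : ∀ w ∈ ([a, b, c] : List ℕ), triDeg {t0} w = 2 := by
    intro w hw
    have hwt : w ∈ t0 := (hmem_t0 w).2 hw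
    have hset : {u : ℕ | (triGraph {t0}).Adj w u} = ↑(t0.erase w) := by
      ext u
      simp only [Set.mem_setOf_eq, Finset.coe_erase, Set.mem_diff, Finset.mem_coe,
        Set.mem_singleton_iff]
      constructor
      · rintro ⟨hne, t, ht, hwt', hut⟩
        rw [Finset.mem_singleton] at ht
        subst ht
        exact ⟨hut, fun e => hne e.symm⟩
      · rintro ⟨hut, hne⟩
        exact ⟨fun e => hne e.symm, t0, Finset.mem_singleton_self _, hwt, hut⟩
    rw [triDeg, hset, Set.ncard_coe_finset, Finset.card_erase_of_mem hwt, hcard]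
  have htv : ∀ w ∈ t0, tv {t0} w = {t0} := by
    intro w hw
    ext t
    simp only [mem_tv, Finset.mem_singleton]
    constructor
    · tauto
    · rintro rfl; exact ⟨rfl, hw⟩
  refine ⟨hnd, hlen, ?_, ?_, ?_, ?_, ?_, ?_, ?_⟩
  · intro t ht
    rw [Finset.mem_singleton] at ht
    subst ht
    exact ⟨hcard, fun x hx => (hmem_t0 x).1 hx⟩
  · intro x y hxy
    obtain ⟨hx, hy⟩ := cyclicAdj_mem hxy
    have hne := cyclicAdj_ne hnd hlen hxy
    have : tl {t0} x y = {t0} := by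
      ext t
      simp only [mem_tl, Finset.mem_singleton]
      constructor
      · tauto
      · rintro rfl
        exact ⟨rfl, (hmem_t0 x).2 hx, (hmem_t0 y).2 hy⟩
    rw [this, Finset.card_singleton]
  · intro x y t ht hx hy hne hncyc
    rw [Finset.mem_singleton] at ht
    subst ht
    exact absurd (all_pairs3 ((hmem_t0 x).1 hx) ((hmem_t0 y).1 hy) hne) hncyc
  · intro w hw
    rw [hdeg w hw, htv w ((hmem_t0 w).2 hw), Finset.card_singleton]
  · intro w x y hw hwx hwy hxy
    have hx := (cyclicAdj_mem hwx).2
    have hy := (cyclicAdj_mem hwy).2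
    have hwx' := cyclicAdj_ne hnd hlen hwx
    have hwy' := cyclicAdj_ne hnd hlen hwy
    have hsub : ({w, x, y} : Finset ℕ) ⊆ t0 := by
      intro z hz
      simp only [Finset.mem_insert, Finset.mem_singleton] at hz
      rcases hz with rfl | rfl | rfl
      · exact (hmem_t0 z).2 hw
      · exact (hmem_t0 z).2 hx
      · exact (hmem_t0 z).2 hy
    have hc3 : ({w, x, y} : Finset ℕ).card = 3 := by
      rw [Finset.card_insert_of_notMem (by simp [hwx', hwy']),
        Finset.card_insert_of_notMem (by simp [hxy]), Finset.card_singleton]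
    have heq : ({w, x, y} : Finset ℕ) = t0 :=
      Finset.eq_of_subset_of_card_le hsub (by rw [hcard, hc3])
    rw [htv w ((hmem_t0 w).2 hw), Finset.card_singleton]
    constructor
    · intro _
      rw [Finset.mem_singleton]
      exact heq
    · intro _
      rfl
  · intro _
    constructor
    · have hE : earSet [a, b, c] {t0} = {x : ℕ | x ∈ ([a, b, c] : List ℕ)} := by
        ext w
        simp only [earSet, Set.mem_setOf_eq]
        exact ⟨fun h1 => h1.1, fun h1 => ⟨h1, hdeg w h1⟩⟩
      have hE2 : {x : ℕ | x ∈ ([a, b, c] : List ℕ)} = ↑t0 := by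
        ext z; simp [ht0]
      rw [hE, hE2, Set.ncard_coe_finset, hcard]
    · rw [intF, Finset.filter_singleton]
      have hni : ¬ Internal [a, b, c] t0 := by
        intro hI
        exact hI a (by simp [ht0]) b (by simp [ht0]) hab
          (all_pairs3 (by simp) (by simp) hab)
      rw [if_neg hni, Finset.card_empty]
  · intro h4
    simp only [List.length_cons, List.length_nil] at h4
    omega

lemma triGraph_adj {T : Finset (Finset ℕ)} {u w : ℕ} :
    (triGraph T).Adj u w ↔ u ≠ w ∧ ∃ t ∈ T, u ∈ t ∧ w ∈ t := Iff.rfl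

lemma tl_insert_pos {T : Finset (Finset ℕ)} {s : Finset ℕ} {x y : ℕ} (hx : x ∈ s) (hy : y ∈ s) :
    tl (insert s T) x y = insert s (tl T x y) := by
  ext t
  simp only [mem_tl, Finset.mem_insert]
  constructor
  · rintro ⟨rfl | ht, h1, h2⟩
    · exact Or.inl rfl
    · exact Or.inr ⟨ht, h1, h2⟩
  · rintro (rfl | ⟨ht, h1, h2⟩)
    · exact ⟨Or.inl rfl, hx, hy⟩
    · exact ⟨Or.inr ht, h1, h2⟩

lemma tl_insert_neg {T : Finset (Finset ℕ)} {s : Finset ℕ} {x y : ℕ} (h : ¬(x ∈ s ∧ y ∈ s)) :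
    tl (insert s T) x y = tl T x y := by
  ext t; simp only [mem_tl, Finset.mem_insert]
  constructor
  · rintro ⟨rfl | ht, h1, h2⟩
    · exact absurd ⟨h1, h2⟩ h
    · exact ⟨ht, h1, h2⟩
  · rintro ⟨ht, h1, h2⟩
    exact ⟨Or.inr ht, h1, h2⟩

lemma tv_insert_pos {T : Finset (Finset ℕ)} {s : Finset ℕ} {w : ℕ} (hw : w ∈ s) :
    tv (insert s T) w = insert s (tv T w) := by
  ext t
  simp only [mem_tv, Finset.mem_insert]
  constructor
  · rintro ⟨rfl | ht, h1⟩
    · exact Or.inl rfl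
    · exact Or.inr ⟨ht, h1⟩
  · rintro (rfl | ⟨ht, h1⟩)
    · exact ⟨Or.inl rfl, hw⟩
    · exact ⟨Or.inr ht, h1⟩

lemma tv_insert_neg {T : Finset (Finset ℕ)} {s : Finset ℕ} {w : ℕ} (hw : w ∉ s) :
    tv (insert s T) w = tv T w := by
  ext t; simp only [mem_tv, Finset.mem_insert]
  constructor
  · rintro ⟨rfl | ht, h1⟩
    · exact absurd h1 hw
    · exact ⟨ht, h1⟩
  · rintro ⟨ht, h1⟩
    exact ⟨Or.inr ht, h1⟩

lemma nodup_insert_mid {l₁ l₂ : List ℕ} {a v b : ℕ} (hnd : (l₁ ++ a :: b :: l₂).Nodup)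
    (hv : v ∉ l₁ ++ a :: b :: l₂) : (l₁ ++ a :: v :: b :: l₂).Nodup := by
  simp only [List.nodup_append, List.nodup_cons, List.mem_cons, List.disjoint_cons_right,
    List.mem_append] at hnd ⊢
  simp only [List.mem_append, List.mem_cons] at hv
  obtain ⟨h1, ⟨h2, h3, h4⟩, h5⟩ := hnd
  refine ⟨h1, ⟨by tauto, by tauto, h3, h4⟩, ?_⟩
  rintro x hx y (rfl | rfl | rfl | hy)
  · exact h5 x hx _ (Or.inl rfl)
  · rintro rfl; exact hv (Or.inl hx)
  · exact h5 x hx _ (Or.inr (Or.inl rfl))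
  · exact h5 x hx y (Or.inr (Or.inr hy))

set_option maxHeartbeats 2000000 in
lemma ear_step {l₁ l₂ : List ℕ} {a v b : ℕ} {T : Finset (Finset ℕ)}
    (hv0 : v ∉ l₁ ++ a :: b :: l₂) (ih : Inv (l₁ ++ a :: b :: l₂) T) :
    Inv (l₁ ++ a :: v :: b :: l₂) (insert {a, v, b} T) := by
  classical
  obtain ⟨hnd, hlen3, htri, hbdry, hdiag, hdeg, hfan, hcount3, hcount⟩ := ih
  have hadj := adj_step hnd hv0 hlen3
  obtain ⟨ha1, hb1, hab, ha2, hb2, hnd2, hnd1⟩ := nodup_unpack hnd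
  have hv := hv0
  simp only [List.mem_append, List.mem_cons] at hv
  push_neg at hv
  obtain ⟨hv1, hva, hvb, hv2⟩ := hv
  set L : List ℕ := l₁ ++ a :: b :: l₂ with hL
  set L' : List ℕ := l₁ ++ a :: v :: b :: l₂ with hL'
  set tn : Finset ℕ := {a, v, b} with htn
  set T' : Finset (Finset ℕ) := insert tn T with hT'
  have hmemL' : ∀ x : ℕ, x ∈ L' ↔ x = v ∨ x ∈ L := by
    intro x
    rw [hL, hL']
    simp only [List.mem_append, List.mem_cons]
    tauto
  have haL : a ∈ L := by rw [hL]; simp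
  have hbL : b ∈ L := by rw [hL]; simp
  have hsubL : ∀ x : ℕ, x ∈ L → x ∈ L' := fun x hx => (hmemL' x).2 (Or.inr hx)
  have hndL' : L'.Nodup := nodup_insert_mid hnd hv0
  have hlen' : L'.length = L.length + 1 := by
    rw [hL, hL']
    simp only [List.length_append, List.length_cons]
    omega
  have hlen3' : 3 ≤ L'.length := by omega
  have hlen4' : 4 ≤ L'.length := by omega
  have htn_mem : ∀ x : ℕ, x ∈ tn ↔ x = a ∨ x = v ∨ x = b := by
    intro x; rw [htn]; simp
  have hatn : a ∈ tn := (htn_mem a).2 (Or.inl rfl)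
  have hvtn : v ∈ tn := (htn_mem v).2 (Or.inr (Or.inl rfl))
  have hbtn : b ∈ tn := (htn_mem b).2 (Or.inr (Or.inr rfl))
  have htn_card : tn.card = 3 := by
    rw [htn, Finset.card_insert_of_notMem (by simp [Ne.symm hva, hab]),
      Finset.card_insert_of_notMem (by simp [hvb]), Finset.card_singleton]
  have htriL : ∀ t ∈ T, ∀ x ∈ t, x ∈ L := fun t ht => (htri t ht).2
  have hvnotin : ∀ t ∈ T, v ∉ t := fun t ht hvt => hv0 (htriL t ht v hvt)
  have htnT : tn ∉ T := fun h => hvnotin tn h hvtn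
  have habL : CyclicAdj L a b := by
    have hlenL : L.length = l₁.length + l₂.length + 2 := by
      rw [hL]; simp only [List.length_append, List.length_cons]; omega
    have h1 : L[l₁.length]? = some a := by
      rw [hL, List.getElem?_append_right (le_refl _)]
      simp
    have hlt : l₁.length + 1 < L.length := by omega
    have h2 : L[(l₁.length + 1) % L.length]? = some b := by
      rw [Nat.mod_eq_of_lt hlt, hL, List.getElem?_append_right (by omega)]
      simp
    exact ⟨l₁.length, by omega, Or.inl ⟨h1, h2⟩⟩
  have hnabL' : ¬CyclicAdj L' a b := by
    rw [hadj a b]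
    rintro (⟨-, hne1, -⟩ | ⟨-, he⟩ | ⟨he, -⟩ | ⟨he, -⟩ | ⟨he, -⟩)
    · exact hne1 ⟨rfl, rfl⟩
    · exact hvb he.symm
    · exact hva he.symm
    · exact hva he.symm
    · exact hab he
  have havL' : CyclicAdj L' a v := (hadj a v).2 (Or.inr (Or.inl ⟨rfl, rfl⟩))
  have hvbL' : CyclicAdj L' v b := (hadj v b).2 (Or.inr (Or.inr (Or.inr (Or.inl ⟨rfl, rfl⟩))))
  obtain ⟨t0, ht0⟩ := Finset.card_eq_one.1 (hbdry a b habL)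
  have ht0m : t0 ∈ T ∧ a ∈ t0 ∧ b ∈ t0 := by
    have ht : t0 ∈ tl T a b := ht0 ▸ Finset.mem_singleton_self t0
    exact mem_tl.1 ht
  obtain ⟨c, hca, hcb, ht0eq⟩ := third_vertex (htri t0 ht0m.1).1 ht0m.2.1 ht0m.2.2 hab
  have hct0 : c ∈ t0 := by rw [ht0eq]; simp
  have hcL : c ∈ L := htriL t0 ht0m.1 c hct0
  have hcv : c ≠ v := fun e => hv0 (e ▸ hcL)
  have htnt0 : tn ≠ t0 := fun e => htnT (e ▸ ht0m.1)
  have htl_av : tl T' a v = {tn} := by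
    rw [hT', tl_insert_pos hatn hvtn]
    have : tl T a v = ∅ := by
      apply Finset.eq_empty_of_forall_notMem
      intro t ht
      rw [mem_tl] at ht
      exact hvnotin t ht.1 ht.2.2
    rw [this, Finset.insert_empty]
  have htl_vb : tl T' v b = {tn} := by
    rw [hT', tl_insert_pos hvtn hbtn]
    have : tl T v b = ∅ := by
      apply Finset.eq_empty_of_forall_notMem
      intro t ht
      rw [mem_tl] at ht
      exact hvnotin t ht.1 ht.2.1
    rw [this, Finset.insert_empty]
  have htl_ab : (tl T' a b).card = 2 := by
    rw [hT', tl_insert_pos hatn hbtn, ht0,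
      Finset.card_insert_of_notMem (by rw [Finset.mem_singleton]; exact htnt0),
      Finset.card_singleton]
  have htl_old : ∀ x y : ℕ, x ≠ v → y ≠ v → ¬(x = a ∧ y = b) → ¬(x = b ∧ y = a) → x ≠ y →
      tl T' x y = tl T x y := by
    intro x y hxv hyv hne1 hne2 hxy
    rw [hT']
    apply tl_insert_neg
    rintro ⟨hx, hy⟩
    rcases (htn_mem x).1 hx with rfl | rfl | rfl <;>
      rcases (htn_mem y).1 hy with rfl | rfl | rfl <;>
      first
        | exact hxy rfl
        | exact hxv rfl
        | exact hyv rfl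
        | exact hne1 ⟨rfl, rfl⟩
        | exact hne2 ⟨rfl, rfl⟩
  -- field: tri
  have htri' : ∀ t ∈ T', t.card = 3 ∧ ∀ x ∈ t, x ∈ L' := by
    intro t ht
    rcases Finset.mem_insert.1 ht with rfl | htT
    · refine ⟨htn_card, fun x hx => ?_⟩
      rcases (htn_mem x).1 hx with rfl | rfl | rfl
      · exact hsubL _ haL
      · exact (hmemL' x).2 (Or.inl rfl)
      · exact hsubL _ hbL
    · exact ⟨(htri t htT).1, fun x hx => hsubL _ (htriL t htT x hx)⟩
  -- field: bdry
  have hbdry' : ∀ x y : ℕ, CyclicAdj L' x y → (tl T' x y).card = 1 := by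
    intro x y hxy'
    rcases (hadj x y).1 hxy' with ⟨hxy, hne1, hne2⟩ | ⟨rfl, rfl⟩ | ⟨rfl, rfl⟩ | ⟨rfl, rfl⟩ | ⟨rfl, rfl⟩
    · have hxv : x ≠ v := fun e => hv0 (e ▸ (cyclicAdj_mem hxy).1)
      have hyv : y ≠ v := fun e => hv0 (e ▸ (cyclicAdj_mem hxy).2)
      rw [htl_old x y hxv hyv hne1 hne2 (cyclicAdj_ne hnd hlen3 hxy)]
      exact hbdry x y hxy
    · rw [htl_av, Finset.card_singleton]
    · rw [tl_symm, htl_av, Finset.card_singleton]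
    · rw [htl_vb, Finset.card_singleton]
    · rw [tl_symm, htl_vb, Finset.card_singleton]
  -- field: diag
  have hdiag' : ∀ x y : ℕ, ∀ t ∈ T', x ∈ t → y ∈ t → x ≠ y → ¬CyclicAdj L' x y →
      (tl T' x y).card = 2 := by
    intro x y t ht hxt hyt hxy hncyc
    rcases Finset.mem_insert.1 ht with rfl | htT
    · rcases (htn_mem x).1 hxt with rfl | rfl | rfl <;> rcases (htn_mem y).1 hyt with rfl | rfl | rfl
      · exact absurd rfl hxy
      · exact absurd havL' hncyc
      · exact htl_ab
      · exact absurd (cyclicAdj_symm havL') hncyc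
      · exact absurd rfl hxy
      · exact absurd hvbL' hncyc
      · rw [tl_symm]; exact htl_ab
      · exact absurd (cyclicAdj_symm hvbL') hncyc
      · exact absurd rfl hxy
    · have hxL : x ∈ L := htriL t htT x hxt
      have hyL : y ∈ L := htriL t htT y hyt
      have hxv : x ≠ v := fun e => hv0 (e ▸ hxL)
      have hyv : y ≠ v := fun e => hv0 (e ▸ hyL)
      by_cases hne1 : x = a ∧ y = b
      · obtain ⟨rfl, rfl⟩ := hne1
        exact htl_ab
      by_cases hne2 : x = b ∧ y = a
      · obtain ⟨rfl, rfl⟩ := hne2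
        rw [tl_symm]
        exact htl_ab
      have hncycL : ¬CyclicAdj L x y := fun hc => hncyc ((hadj x y).2 (Or.inl ⟨hc, hne1, hne2⟩))
      rw [htl_old x y hxv hyv hne1 hne2 hxy]
      exact hdiag x y t htT hxt hyt hxy hncycL
  -- neighbours are in L
  have hnbrL : ∀ w : ℕ, {u : ℕ | (triGraph T).Adj w u} ⊆ {u : ℕ | u ∈ L} := by
    rintro w u ⟨-, t, ht, -, hut⟩
    exact htriL t ht u hut
  have hnbrFin : ∀ w : ℕ, {u : ℕ | (triGraph T).Adj w u}.Finite :=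
    fun w => Set.Finite.subset (List.finite_toSet L) (hnbrL w)
  have hvnbr : ∀ w : ℕ, v ∉ {u : ℕ | (triGraph T).Adj w u} := by
    rintro w ⟨-, t, ht, -, hvt⟩
    exact hvnotin t ht hvt
  -- tv for the two endpoints
  have htv_end : ∀ w : ℕ, w ∈ tn → tv T' w = insert tn (tv T w) := by
    intro w hw
    rw [hT', tv_insert_pos hw]
  have htv_v : tv T' v = {tn} := by
    rw [hT', tv_insert_pos hvtn]
    have : tv T v = ∅ := by
      apply Finset.eq_empty_of_forall_notMem
      intro t ht
      rw [mem_tv] at ht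
      exact hvnotin t ht.1 ht.2
    rw [this, Finset.insert_empty]
  have htv_mid : ∀ w : ℕ, w ∉ tn → tv T' w = tv T w := by
    intro w hw
    rw [hT', tv_insert_neg hw]
  have hmid_tn : ∀ w : ℕ, w ≠ a → w ≠ v → w ≠ b → w ∉ tn := by
    intro w h1 h2 h3 hmem
    rcases (htn_mem w).1 hmem with rfl | rfl | rfl
    · exact h1 rfl
    · exact h2 rfl
    · exact h3 rfl
  -- degree of the new vertex
  have hnbr_v : {u : ℕ | (triGraph T').Adj v u} = {a, b} := by
    ext u
    simp only [Set.mem_setOf_eq, Set.mem_insert_iff, Set.mem_singleton_iff]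
    constructor
    · rintro ⟨hne, t, ht, hvt, hut⟩
      rcases Finset.mem_insert.1 ht with rfl | htT
      · rcases (htn_mem u).1 hut with rfl | rfl | rfl
        · exact Or.inl rfl
        · exact absurd rfl hne
        · exact Or.inr rfl
      · exact absurd hvt (hvnotin t htT)
    · rintro (rfl | rfl)
      · exact ⟨hva, tn, Finset.mem_insert_self _ _, hvtn, hatn⟩
      · exact ⟨hvb, tn, Finset.mem_insert_self _ _, hvtn, hbtn⟩
  have hdeg_v : triDeg T' v = 2 := by
    rw [triDeg, hnbr_v]
    exact Set.ncard_pair hab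
  -- degree of the endpoints a b
  have hnbr_end : ∀ w z : ℕ, (w = a ∧ z = b) ∨ (w = b ∧ z = a) →
      {u : ℕ | (triGraph T').Adj w u} = insert v {u : ℕ | (triGraph T).Adj w u} := by
    intro w z hwz
    have hwtn : w ∈ tn := by rcases hwz with ⟨rfl, -⟩ | ⟨rfl, -⟩; exacts [hatn, hbtn]
    have hwz' : w ≠ z := by rcases hwz with ⟨rfl, rfl⟩ | ⟨rfl, rfl⟩; exacts [hab, hab.symm]
    have hwt0 : w ∈ t0 := by rcases hwz with ⟨rfl, -⟩ | ⟨rfl, -⟩; exacts [ht0m.2.1, ht0m.2.2]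
    have hzt0 : z ∈ t0 := by rcases hwz with ⟨-, rfl⟩ | ⟨-, rfl⟩; exacts [ht0m.2.2, ht0m.2.1]
    have hwv : w ≠ v := by rcases hwz with ⟨rfl, -⟩ | ⟨rfl, -⟩; exacts [Ne.symm hva, Ne.symm hvb]
    have hcov : ∀ u : ℕ, u ∈ tn → u = v ∨ u = w ∨ u = z := by
      intro u hu
      rcases (htn_mem u).1 hu with rfl | rfl | rfl
      · rcases hwz with ⟨rfl, -⟩ | ⟨-, rfl⟩
        · exact Or.inr (Or.inl rfl)
        · exact Or.inr (Or.inr rfl)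
      · exact Or.inl rfl
      · rcases hwz with ⟨-, rfl⟩ | ⟨rfl, -⟩
        · exact Or.inr (Or.inr rfl)
        · exact Or.inr (Or.inl rfl)
    ext u
    simp only [Set.mem_setOf_eq, Set.mem_insert_iff]
    constructor
    · rintro ⟨hne, t, ht, hwt, hut⟩
      rcases Finset.mem_insert.1 ht with rfl | htT
      · rcases hcov u hut with rfl | rfl | rfl
        · exact Or.inl rfl
        · exact absurd rfl hne
        · exact Or.inr ⟨hwz', t0, ht0m.1, hwt0, hzt0⟩
      · exact Or.inr ⟨hne, t, htT, hwt, hut⟩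
    · rintro (rfl | ⟨hne, t, htT, h1, h2⟩)
      · exact ⟨hwv, tn, Finset.mem_insert_self _ _, hwtn, hvtn⟩
      · exact ⟨hne, t, Finset.mem_insert_of_mem htT, h1, h2⟩
  have hdeg_end : ∀ w z : ℕ, (w = a ∧ z = b) ∨ (w = b ∧ z = a) →
      triDeg T' w = triDeg T w + 1 := by
    intro w z hwz
    rw [triDeg, triDeg, hnbr_end w z hwz,
      Set.ncard_insert_of_notMem (hvnbr w) (hnbrFin w)]
  -- degree of middle vertices
  have hnbr_mid : ∀ w : ℕ, w ∉ tn →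
      {u : ℕ | (triGraph T').Adj w u} = {u : ℕ | (triGraph T).Adj w u} := by
    intro w hw
    ext u
    simp only [Set.mem_setOf_eq]
    constructor
    · rintro ⟨hne, t, ht, hwt, hut⟩
      rcases Finset.mem_insert.1 ht with rfl | htT
      · exact absurd hwt hw
      · exact ⟨hne, t, htT, hwt, hut⟩
    · rintro ⟨hne, t, htT, h1, h2⟩
      exact ⟨hne, t, Finset.mem_insert_of_mem htT, h1, h2⟩
  -- field: deg
  have hdeg' : ∀ w ∈ L', triDeg T' w = (tv T' w).card + 1 := by
    intro w hw'
    rcases (hmemL' w).1 hw' with rfl | hwL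
    · rw [hdeg_v, htv_v, Finset.card_singleton]
    · have hwv : w ≠ v := fun e => hv0 (e ▸ hwL)
      by_cases hwa : w = a
      · subst hwa
        rw [hdeg_end w b (Or.inl ⟨rfl, rfl⟩), hdeg w hwL, htv_end w hatn,
          Finset.card_insert_of_notMem (fun hm => htnT (mem_tv.1 hm).1)]
      by_cases hwb : w = b
      · subst hwb
        rw [hdeg_end w a (Or.inr ⟨rfl, rfl⟩), hdeg w hwL, htv_end w hbtn,
          Finset.card_insert_of_notMem (fun hm => htnT (mem_tv.1 hm).1)]
      have hwtn : w ∉ tn := hmid_tn w hwa hwv hwb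
      rw [triDeg, hnbr_mid w hwtn, htv_mid w hwtn, ← triDeg, hdeg w hwL]
  -- ends have ≥ 2 triangles in T'
  have htv2 : ∀ w : ℕ, w ∈ tn → w ∈ t0 → (tv T' w).card ≠ 1 := by
    intro w hwtn hwt0 h1
    have h2 : 1 < (tv T' w).card := by
      apply Finset.one_lt_card.2
      refine ⟨tn, ?_, t0, ?_, htnt0⟩
      · rw [htv_end w hwtn]; exact Finset.mem_insert_self _ _
      · rw [htv_end w hwtn]; exact Finset.mem_insert_of_mem (mem_tv.2 ⟨ht0m.1, hwt0⟩)
    omega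
  -- no L'-neighbour of a is b, and similar
  have hnabz : ∀ z : ℕ, CyclicAdj L' a z → z ≠ b := fun z hz e => hnabL' (e ▸ hz)
  have hnbaz : ∀ z : ℕ, CyclicAdj L' b z → z ≠ a :=
    fun z hz e => hnabL' (cyclicAdj_symm (e ▸ hz))
  -- old-neighbour extraction for a
  -- field: fan
  have hfan' : ∀ w x y : ℕ, w ∈ L' → CyclicAdj L' w x → CyclicAdj L' w y → x ≠ y →
      ((tv T' w).card = 1 ↔ ({w, x, y} : Finset ℕ) ∈ T') := by
    intro w x y hw' hwx hwy hxy
    rcases (hmemL' w).1 hw' with he | hwL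
    · rw [he] at hwx hwy ⊢
      have hxz : x = a ∨ x = b := by
        rcases (hadj v x).1 hwx with ⟨hcyc, -, -⟩ | ⟨he, -⟩ | ⟨-, rfl⟩ | ⟨-, rfl⟩ | ⟨he, -⟩
        · exact absurd ((cyclicAdj_mem hcyc).1) hv0
        · exact absurd he hva
        · exact Or.inl rfl
        · exact Or.inr rfl
        · exact absurd he hvb
      have hyz : y = a ∨ y = b := by
        rcases (hadj v y).1 hwy with ⟨hcyc, -, -⟩ | ⟨he, -⟩ | ⟨-, rfl⟩ | ⟨-, rfl⟩ | ⟨he, -⟩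
        · exact absurd ((cyclicAdj_mem hcyc).1) hv0
        · exact absurd he hva
        · exact Or.inl rfl
        · exact Or.inr rfl
        · exact absurd he hvb
      have hxyab : ({v, x, y} : Finset ℕ) = tn := by
        rcases hxz with rfl | rfl <;> rcases hyz with rfl | rfl
        · exact absurd rfl hxy
        · ext z; rw [htn_mem]; simp; tauto
        · ext z; rw [htn_mem]; simp; tauto
        · exact absurd rfl hxy
      rw [htv_v, Finset.card_singleton, hxyab, hT']
      exact iff_of_true rfl (Finset.mem_insert_self _ _)
    · have hwv : w ≠ v := fun e => hv0 (e ▸ hwL)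
      by_cases hwa : w = a
      · subst hwa
        refine iff_of_false (htv2 w hatn ht0m.2.1) ?_
        intro hmem
        have hxb : x ≠ b := hnabz x hwx
        have hyb : y ≠ b := hnabz y hwy
        rcases Finset.mem_insert.1 hmem with heq | hmemT
        · have hbm : b ∈ ({w, x, y} : Finset ℕ) := by rw [heq]; exact hbtn
          simp only [Finset.mem_insert, Finset.mem_singleton] at hbm
          rcases hbm with e | e | e
          · exact hab e.symm
          · exact hxb e.symm
          · exact hyb e.symm
        · have hxL : x ∈ L := htriL _ hmemT x (by simp)
          have hyL : y ∈ L := htriL _ hmemT y (by simp)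
          have hxv : x ≠ v := fun e => hv0 (e ▸ hxL)
          have hyv : y ≠ v := fun e => hv0 (e ▸ hyL)
          have hx' : CyclicAdj L w x := by
            rcases (hadj w x).1 hwx with ⟨h, -, -⟩ | ⟨-, he⟩ | ⟨he, -⟩ | ⟨he, -⟩ | ⟨he, -⟩
            · exact h
            · exact absurd he hxv
            · exact absurd he (Ne.symm hva)
            · exact absurd he (Ne.symm hva)
            · exact absurd he hab
          have hy' : CyclicAdj L w y := by
            rcases (hadj w y).1 hwy with ⟨h, -, -⟩ | ⟨-, he⟩ | ⟨he, -⟩ | ⟨he, -⟩ | ⟨he, -⟩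
            · exact h
            · exact absurd he hyv
            · exact absurd he (Ne.symm hva)
            · exact absurd he (Ne.symm hva)
            · exact absurd he hab
          rcases two_nbrs hnd hx' hy' habL with e | e | e
          · exact hxy e
          · exact hxb e
          · exact hyb e
      by_cases hwb : w = b
      · subst hwb
        refine iff_of_false (htv2 w hbtn ht0m.2.2) ?_
        intro hmem
        have hxa : x ≠ a := hnbaz x hwx
        have hya : y ≠ a := hnbaz y hwy
        rcases Finset.mem_insert.1 hmem with heq | hmemT
        · have ham : a ∈ ({w, x, y} : Finset ℕ) := by rw [heq]; exact hatn
          simp only [Finset.mem_insert, Finset.mem_singleton] at ham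
          rcases ham with e | e | e
          · exact hab e
          · exact hxa e.symm
          · exact hya e.symm
        · have hxL : x ∈ L := htriL _ hmemT x (by simp)
          have hyL : y ∈ L := htriL _ hmemT y (by simp)
          have hxv : x ≠ v := fun e => hv0 (e ▸ hxL)
          have hyv : y ≠ v := fun e => hv0 (e ▸ hyL)
          have hx' : CyclicAdj L w x := by
            rcases (hadj w x).1 hwx with ⟨h, -, -⟩ | ⟨he, -⟩ | ⟨he, -⟩ | ⟨he, -⟩ | ⟨-, he⟩
            · exact h
            · exact absurd he (Ne.symm hab)
            · exact absurd he (Ne.symm hvb)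
            · exact absurd he (Ne.symm hvb)
            · exact absurd he hxv
          have hy' : CyclicAdj L w y := by
            rcases (hadj w y).1 hwy with ⟨h, -, -⟩ | ⟨he, -⟩ | ⟨he, -⟩ | ⟨he, -⟩ | ⟨-, he⟩
            · exact h
            · exact absurd he (Ne.symm hab)
            · exact absurd he (Ne.symm hvb)
            · exact absurd he (Ne.symm hvb)
            · exact absurd he hyv
          rcases two_nbrs hnd hx' hy' (cyclicAdj_symm habL) with e | e | e
          · exact hxy e
          · exact hxa e
          · exact hya e
      · have hwtn : w ∉ tn := hmid_tn w hwa hwv hwb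
        have hxe : CyclicAdj L w x := by
          rcases (hadj w x).1 hwx with ⟨h, -, -⟩ | ⟨he, -⟩ | ⟨he, -⟩ | ⟨he, -⟩ | ⟨he, -⟩
          · exact h
          · exact absurd he hwa
          · exact absurd he hwv
          · exact absurd he hwv
          · exact absurd he hwb
        have hye : CyclicAdj L w y := by
          rcases (hadj w y).1 hwy with ⟨h, -, -⟩ | ⟨he, -⟩ | ⟨he, -⟩ | ⟨he, -⟩ | ⟨he, -⟩
          · exact h
          · exact absurd he hwa
          · exact absurd he hwv
          · exact absurd he hwv
          · exact absurd he hwb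
        have hxv : x ≠ v := fun e => hv0 (e ▸ (cyclicAdj_mem hxe).2)
        have hyv : y ≠ v := fun e => hv0 (e ▸ (cyclicAdj_mem hye).2)
        rw [htv_mid w hwtn]
        have hmm : ({w, x, y} : Finset ℕ) ∈ T' ↔ ({w, x, y} : Finset ℕ) ∈ T := by
          rw [hT', Finset.mem_insert]
          constructor
          · rintro (heq | h)
            · exfalso
              have hvm : v ∈ ({w, x, y} : Finset ℕ) := by rw [heq]; exact hvtn
              simp only [Finset.mem_insert, Finset.mem_singleton] at hvm
              rcases hvm with e | e | e
              · exact hwv e.symm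
              · exact hxv e.symm
              · exact hyv e.symm
            · exact h
          · exact Or.inr
        rw [hmm]
        exact hfan w x y hwL hxe hye hxy
  -- ear set of the new triangulation
  have hEset : earSet L' T' = insert v (earSet L T \ ({a, b} : Set ℕ)) := by
    ext w
    simp only [earSet, Set.mem_setOf_eq, Set.mem_insert_iff, Set.mem_diff,
      Set.mem_singleton_iff]
    constructor
    · rintro ⟨hw', hd2⟩
      rcases (hmemL' w).1 hw' with he | hwL
      · exact Or.inl he
      right
      have hwv : w ≠ v := fun e => hv0 (e ▸ hwL)
      have hc1 : (tv T' w).card = 1 := by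
        have := hdeg' w hw'
        omega
      have hwa : w ≠ a := by rintro rfl; exact htv2 w hatn ht0m.2.1 hc1
      have hwb : w ≠ b := by rintro rfl; exact htv2 w hbtn ht0m.2.2 hc1
      refine ⟨⟨hwL, ?_⟩, fun h => h.elim hwa hwb⟩
      rw [hdeg w hwL, ← htv_mid w (hmid_tn w hwa hwv hwb), hc1]
    · rintro (rfl | ⟨⟨hwL, hd2⟩, hnab⟩)
      · exact ⟨(hmemL' w).2 (Or.inl rfl), hdeg_v⟩
      · have hwa : w ≠ a := fun e => hnab (Or.inl e)
        have hwb : w ≠ b := fun e => hnab (Or.inr e)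
        have hwv : w ≠ v := fun e => hv0 (e ▸ hwL)
        refine ⟨hsubL w hwL, ?_⟩
        rw [hdeg' w (hsubL w hwL), htv_mid w (hmid_tn w hwa hwv hwb)]
        have := hdeg w hwL
        omega
  have hEfin : (earSet L T).Finite :=
    Set.Finite.subset (List.finite_toSet L) (fun u hu => hu.1)
  have hvE : v ∉ earSet L T \ ({a, b} : Set ℕ) := fun h => hv0 h.1.1
  have hE' : (earSet L' T').ncard = (earSet L T \ ({a, b} : Set ℕ)).ncard + 1 := by
    rw [hEset, Set.ncard_insert_of_notMem hvE hEfin.diff]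
  have hacne : a ≠ c := Ne.symm hca
  have hbcne : b ≠ c := Ne.symm hcb
  -- ear characterisations of the endpoints
  have haE : a ∈ earSet L T ↔ CyclicAdj L a c := by
    constructor
    · rintro ⟨-, hd2⟩
      by_contra hnc
      have h2 := hdiag a c t0 ht0m.1 ht0m.2.1 hct0 hacne hnc
      have hle : (tl T a c).card ≤ (tv T a).card := Finset.card_le_card (tl_subset_tv T a c)
      have := hdeg a haL
      omega
    · intro hcyc
      refine ⟨haL, ?_⟩
      have h1 : (tv T a).card = 1 := by
        apply (hfan a b c haL habL hcyc hbcne).2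
        rw [← ht0eq]
        exact ht0m.1
      rw [hdeg a haL, h1]
  have hbE : b ∈ earSet L T ↔ CyclicAdj L b c := by
    constructor
    · rintro ⟨-, hd2⟩
      by_contra hnc
      have h2 := hdiag b c t0 ht0m.1 ht0m.2.2 hct0 hbcne hnc
      have hle : (tl T b c).card ≤ (tv T b).card := Finset.card_le_card (tl_subset_tv T b c)
      have := hdeg b hbL
      omega
    · intro hcyc
      refine ⟨hbL, ?_⟩
      have heq2 : ({b, a, c} : Finset ℕ) = t0 := by
        rw [ht0eq]; ext z; simp; tauto
      have h1 : (tv T b).card = 1 := by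
        apply (hfan b a c hbL (cyclicAdj_symm habL) hcyc hacne).2
        rw [heq2]
        exact ht0m.1
      rw [hdeg b hbL, h1]
  -- internal triangle bookkeeping
  have hInt_tn : ¬Internal L' tn := fun hI => hI a hatn v hvtn (Ne.symm hva) havL'
  have hInt_t0L : ¬Internal L t0 := fun hI => hI a ht0m.2.1 b ht0m.2.2 hab habL
  have hIntOld : ∀ t ∈ T, t ≠ t0 → (Internal L' t ↔ Internal L t) := by
    intro t htT hne
    have habt : ¬(a ∈ t ∧ b ∈ t) := by
      rintro ⟨h1, h2⟩
      apply hne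
      have hmt : t ∈ tl T a b := mem_tl.2 ⟨htT, h1, h2⟩
      rw [ht0, Finset.mem_singleton] at hmt
      exact hmt
    constructor
    · intro hI x hx y hy hxy hcycL
      refine hI x hx y hy hxy ((hadj x y).2 (Or.inl ⟨hcycL, ?_, ?_⟩))
      · rintro ⟨rfl, rfl⟩; exact habt ⟨hx, hy⟩
      · rintro ⟨rfl, rfl⟩; exact habt ⟨hy, hx⟩
    · intro hI x hx y hy hxy hcycL'
      rcases (hadj x y).1 hcycL' with ⟨h, -, -⟩ | ⟨-, he⟩ | ⟨he, -⟩ | ⟨he, -⟩ | ⟨-, he⟩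
      · exact hI x hx y hy hxy h
      · exact hvnotin t htT (he ▸ hy)
      · exact hvnotin t htT (he ▸ hx)
      · exact hvnotin t htT (he ▸ hx)
      · exact hvnotin t htT (he ▸ hy)
  have hback : ∀ x y : ℕ, x ≠ v → y ≠ v →
      CyclicAdj L' x y → ¬(x = a ∧ y = b) → ¬(x = b ∧ y = a) → CyclicAdj L x y := by
    intro x y hxv hyv hcyc hn1 hn2
    rcases (hadj x y).1 hcyc with ⟨h, -, -⟩ | ⟨-, he⟩ | ⟨he, -⟩ | ⟨he, -⟩ | ⟨-, he⟩
    · exact h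
    · exact absurd he hyv
    · exact absurd he hxv
    · exact absurd he hxv
    · exact absurd he hyv
  have hfwd : ∀ x y : ℕ, ¬(x = a ∧ y = b) → ¬(x = b ∧ y = a) →
      CyclicAdj L x y → CyclicAdj L' x y :=
    fun x y hn1 hn2 h => (hadj x y).2 (Or.inl ⟨h, hn1, hn2⟩)
  have hInt_t0' : Internal L' t0 ↔ (¬CyclicAdj L a c ∧ ¬CyclicAdj L b c) := by
    constructor
    · intro hI
      constructor
      · intro hcyc
        exact hI a ht0m.2.1 c hct0 hacne
          (hfwd a c (fun h => hcb h.2) (fun h => hab h.1) hcyc)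
      · intro hcyc
        exact hI b ht0m.2.2 c hct0 hbcne
          (hfwd b c (fun h => hab h.1.symm) (fun h => hca h.2) hcyc)
    · rintro ⟨h1, h2⟩ x hx y hy hxy hcyc
      rw [ht0eq] at hx hy
      simp only [Finset.mem_insert, Finset.mem_singleton] at hx hy
      rcases hx with rfl | rfl | rfl <;> rcases hy with rfl | rfl | rfl
      · exact hxy rfl
      · exact hnabL' hcyc
      · exact h1 (hback _ _ (Ne.symm hva) hcv hcyc (fun h => hcb h.2) (fun h => hab h.1))
      · exact hnabL' (cyclicAdj_symm hcyc)
      · exact hxy rfl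
      · exact h2 (hback _ _ (Ne.symm hvb) hcv hcyc (fun h => hab h.1.symm) (fun h => hca h.2))
      · exact h1 (cyclicAdj_symm
          (hback _ _ hcv (Ne.symm hva) hcyc (fun h => hca h.1) (fun h => hcb h.1)))
      · exact h2 (cyclicAdj_symm
          (hback _ _ hcv (Ne.symm hvb) hcyc (fun h => hca h.1) (fun h => hcb h.1)))
      · exact hxy rfl
  -- the final count
  have hcount' : (earSet L' T').ncard = (intF L' T').card + 2 := by
    by_cases hcase : CyclicAdj L a c ∨ CyclicAdj L b c
    · have hiff : ∀ t ∈ T, (Internal L' t ↔ Internal L t) := by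
        intro t ht
        by_cases hteq : t = t0
        · subst hteq
          refine iff_of_false (fun hI => ?_) hInt_t0L
          rcases hcase with h | h
          · exact (hInt_t0'.1 hI).1 h
          · exact (hInt_t0'.1 hI).2 h
        · exact hIntOld t ht hteq
      have hIeq : intF L' T' = intF L T := by
        unfold intF
        rw [hT', Finset.filter_insert, if_neg hInt_tn]
        ext t
        simp only [Finset.mem_filter]
        constructor
        · rintro ⟨ht1, ht2⟩
          exact ⟨ht1, (hiff t ht1).1 ht2⟩
        · rintro ⟨ht1, ht2⟩
          exact ⟨ht1, (hiff t ht1).2 ht2⟩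
      rcases Nat.lt_or_ge L.length 4 with hlt | hge
      · have h3 : L.length = 3 := by omega
        obtain ⟨hE3, hI0⟩ := hcount3 h3
        obtain ⟨p, q, r, hL3⟩ := List.length_eq_three.1 h3
        have haL3 := haL
        have hbL3 := hbL
        have hcL3 := hcL
        rw [hL3] at haL3 hbL3 hcL3
        have hacC : CyclicAdj L a c := by rw [hL3]; exact all_pairs3 haL3 hcL3 hacne
        have hbcC : CyclicAdj L b c := by rw [hL3]; exact all_pairs3 hbL3 hcL3 hbcne
        have hpair_sub : ({a, b} : Set ℕ) ⊆ earSet L T := by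
          rintro z (rfl | hz)
          · exact haE.2 hacC
          · rw [Set.mem_singleton_iff] at hz
            subst hz
            exact hbE.2 hbcC
        have hdiffcard : (earSet L T \ ({a, b} : Set ℕ)).ncard = 1 := by
          rw [Set.ncard_diff hpair_sub (Set.toFinite _), hE3, Set.ncard_pair hab]
        rw [hE', hdiffcard, hIeq, hI0]
      · have hnboth : ¬(CyclicAdj L a c ∧ CyclicAdj L b c) :=
          fun hp => three_cycle hnd hge hab hacne hbcne habL hp.1 hp.2
        have hge' := hcount hge
        rcases hcase with hac | hbc
        · have hbnc : ¬CyclicAdj L b c := fun h => hnboth ⟨hac, h⟩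
          have haE' : a ∈ earSet L T := haE.2 hac
          have hbnE : b ∉ earSet L T := fun h => hbnc (hbE.1 h)
          have hdeq : earSet L T \ ({a, b} : Set ℕ) = earSet L T \ {a} := by
            ext z
            simp only [Set.mem_diff, Set.mem_insert_iff, Set.mem_singleton_iff]
            constructor
            · rintro ⟨h1, h2⟩
              exact ⟨h1, fun e => h2 (Or.inl e)⟩
            · rintro ⟨h1, h2⟩
              refine ⟨h1, ?_⟩
              rintro (rfl | rfl)
              · exact h2 rfl
              · exact hbnE h1
          have h1le : 1 ≤ (earSet L T).ncard := by
            have hne : (earSet L T).Nonempty := ⟨a, haE'⟩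
            have := (Set.ncard_pos hEfin).2 hne
            omega
          rw [hE', hdeq, Set.ncard_diff_singleton_of_mem haE', hIeq]
          omega
        · have hanc : ¬CyclicAdj L a c := fun h => hnboth ⟨h, hbc⟩
          have hbE' : b ∈ earSet L T := hbE.2 hbc
          have hanE : a ∉ earSet L T := fun h => hanc (haE.1 h)
          have hdeq : earSet L T \ ({a, b} : Set ℕ) = earSet L T \ {b} := by
            ext z
            simp only [Set.mem_diff, Set.mem_insert_iff, Set.mem_singleton_iff]
            constructor
            · rintro ⟨h1, h2⟩
              exact ⟨h1, fun e => h2 (Or.inr e)⟩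
            · rintro ⟨h1, h2⟩
              refine ⟨h1, ?_⟩
              rintro (rfl | rfl)
              · exact hanE h1
              · exact h2 rfl
          have h1le : 1 ≤ (earSet L T).ncard := by
            have hne : (earSet L T).Nonempty := ⟨b, hbE'⟩
            have := (Set.ncard_pos hEfin).2 hne
            omega
          rw [hE', hdeq, Set.ncard_diff_singleton_of_mem hbE', hIeq]
          omega
    · push_neg at hcase
      obtain ⟨hnac, hnbc⟩ := hcase
      have hge : 4 ≤ L.length := by
        by_contra hlt
        have h3 : L.length = 3 := by omega
        obtain ⟨p, q, r, hL3⟩ := List.length_eq_three.1 h3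
        have haL3 := haL
        have hcL3 := hcL
        rw [hL3] at haL3 hcL3
        exact hnac (by rw [hL3]; exact all_pairs3 haL3 hcL3 hacne)
      have hge' := hcount hge
      have hanE : a ∉ earSet L T := fun h => hnac (haE.1 h)
      have hbnE : b ∉ earSet L T := fun h => hnbc (hbE.1 h)
      have hdeq : earSet L T \ ({a, b} : Set ℕ) = earSet L T := by
        ext z
        simp only [Set.mem_diff, Set.mem_insert_iff, Set.mem_singleton_iff]
        constructor
        · exact fun h => h.1
        · intro h1
          refine ⟨h1, ?_⟩
          rintro (rfl | rfl)
          · exact hanE h1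
          · exact hbnE h1
      have hIeq : intF L' T' = insert t0 (intF L T) := by
        unfold intF
        rw [hT', Finset.filter_insert, if_neg hInt_tn]
        ext t
        simp only [Finset.mem_filter, Finset.mem_insert]
        constructor
        · rintro ⟨h1, h2⟩
          by_cases hteq : t = t0
          · exact Or.inl hteq
          · exact Or.inr ⟨h1, (hIntOld t h1 hteq).1 h2⟩
        · rintro (rfl | ⟨h1, h2⟩)
          · exact ⟨ht0m.1, hInt_t0'.2 ⟨hnac, hnbc⟩⟩
          · refine ⟨h1, ?_⟩
            by_cases hteq : t = t0
            · subst hteq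
              exact absurd h2 hInt_t0L
            · exact (hIntOld t h1 hteq).2 h2
      have ht0nI : t0 ∉ intF L T := by
        intro h
        unfold intF at h
        exact hInt_t0L (Finset.mem_filter.1 h).2
      rw [hE', hdeq, hIeq, Finset.card_insert_of_notMem ht0nI]
      omega
  exact ⟨hndL', hlen3', htri', hbdry', hdiag', hdeg', hfan',
    fun h3 => absurd h3 (by omega), fun _ => hcount'⟩






lemma inv_of {L : List ℕ} {T : Finset (Finset ℕ)} (h : PolygonTriangulation L T) : Inv L T := by
  induction h with
  | base a b c h => exact base_case h
  | ear l₁ l₂ a v b T h hv ih => exact ear_step hv ih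

end Aux

/-- A maximal outerplanar graph on `n > 3` vertices has at least three vertices
of degree 2 iff some triangle of its triangulation is internal, i.e. shares each
of its three edges with another triangle. -/
theorem three_ears_iff_internal_triangle (L : List ℕ) (T : Finset (Finset ℕ))
    (h : PolygonTriangulation L T) (hn : 3 < L.length) :
    3 ≤ {v : ℕ | v ∈ L ∧ triDeg T v = 2}.ncard ↔
      ∃ t ∈ T, ∀ a ∈ t, ∀ b ∈ t, a ≠ b →
        ∃ s ∈ T, s ≠ t ∧ a ∈ s ∧ b ∈ s := by
  classical
  have inv := Aux.inv_of h
  have hge : 4 ≤ L.length := hn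
  have hc := inv.count hge
  have hEdef : {v : ℕ | v ∈ L ∧ triDeg T v = 2} = Aux.earSet L T := rfl
  rw [hEdef, hc]
  constructor
  · intro h3
    have hIpos : 0 < (Aux.intF L T).card := by omega
    obtain ⟨t, ht⟩ := Finset.card_pos.1 hIpos
    unfold Aux.intF at ht
    rw [Finset.mem_filter] at ht
    refine ⟨t, ht.1, ?_⟩
    intro x hx y hy hxy
    have hncyc := ht.2 x hx y hy hxy
    have h2 := inv.diag x y t ht.1 hx hy hxy hncyc
    obtain ⟨s, hs, hst⟩ := Finset.exists_mem_ne (s := Aux.tl T x y) (by omega) t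
    exact ⟨s, (Aux.mem_tl.1 hs).1, hst, (Aux.mem_tl.1 hs).2.1, (Aux.mem_tl.1 hs).2.2⟩
  · rintro ⟨t, htT, hshare⟩
    have hInt : Aux.Internal L t := by
      intro x hx y hy hxy hcyc
      obtain ⟨s, hsT, hst, hxs, hys⟩ := hshare x hx y hy hxy
      have h1 := inv.bdry x y hcyc
      have h2 : 1 < (Aux.tl T x y).card :=
        Finset.one_lt_card.2
          ⟨t, Aux.mem_tl.2 ⟨htT, hx, hy⟩, s, Aux.mem_tl.2 ⟨hsT, hxs, hys⟩, Ne.symm hst⟩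
      omega
    have hmem : t ∈ Aux.intF L T := by
      unfold Aux.intF
      exact Finset.mem_filter.2 ⟨htT, hInt⟩
    have hpos : 0 < (Aux.intF L T).card := Finset.card_pos.2 ⟨t, hmem⟩
    omega
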